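/- Let K be an algebraically closed field of characteristic zero, G a finite group, M ≤ G an abelian subgroup, ω : M̂ × M̂ → Kˣ a normalized non-degenerate 2-cocycle, and τ ∈ G. Then the natural number |N_τ|·|Rad_τ| is a perfect square, and its positive integer square root divides |M|. -/

import Mathlib

open scoped TensorProduct BigOperators
open MonoidAlgebra

noncomputable section

variable (K : Type) [Field K] {G : Type} [Group G]

/-- The primitive idempotent `e_φ^M ∈ K M ⊆ K G` attached to a character `φ` of a subgroup
`M` of `G`. -/
def idem (M : Subgroup G) (φ : ↥M →* Kˣ) : MonoidAlgebra K G :=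
  (Nat.card M : K)⁻¹ • ∑ᶠ m : ↥M, ((φ m⁻¹ : Kˣ) : K) • MonoidAlgebra.of K G (m : G)

/-- `N_τ = {(φ,ψ) ∈ M̂ × M̂ : ψ(m) = φ(τ⁻¹mτ) for all m ∈ M ∩ τMτ⁻¹}`. -/
def Ntau (M : Subgroup G) (τ : G) : Set ((↥M →* Kˣ) × (↥M →* Kˣ)) :=
  {p | ∀ (m : G) (hm : m ∈ M) (hm' : τ⁻¹ * m * τ ∈ M),
    p.2 ⟨m, hm⟩ = p.1 ⟨τ⁻¹ * m * τ, hm'⟩}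

/-- The `2`-cocycle `(ω,ω⁻¹)` on `M̂ × M̂`. -/
def pairCocycle (M : Subgroup G) (ω : (↥M →* Kˣ) → (↥M →* Kˣ) → Kˣ)
    (x y : (↥M →* Kˣ) × (↥M →* Kˣ)) : Kˣ :=
  ω x.1 y.1 * (ω x.2 y.2)⁻¹

/-- `Rad_τ`, the radical of the restriction of `(ω,ω⁻¹)` to `N_τ`. -/
def Radtau (M : Subgroup G) (ω : (↥M →* Kˣ) → (↥M →* Kˣ) → Kˣ) (τ : G) :
    Set ((↥M →* Kˣ) × (↥M →* Kˣ)) :=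
  {x ∈ Ntau K M τ | ∀ y ∈ Ntau K M τ, pairCocycle K M ω x y = pairCocycle K M ω y x}

/-- `(Rad_τ)^⊥ = {(m,m') ∈ M × M : φ(m)·ψ(m') = 1 for all (φ,ψ) ∈ Rad_τ}`. -/
def RadtauPerp (M : Subgroup G) (ω : (↥M →* Kˣ) → (↥M →* Kˣ) → Kˣ) (τ : G) :
    Set (↥M × ↥M) :=
  {q | ∀ p ∈ Radtau K M ω τ, p.1 q.1 * p.2 q.2 = 1}

section Auxiliary

variable {K}

/-- Orthogonality: the sum of the trivial character. -/
private lemma charSum_one {H : Type} [CommGroup H] [Fintype H] :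
    ∑ h : H, (((1 : H →* Kˣ) h : Kˣ) : K) = (Fintype.card H : K) := by simp

/-- Orthogonality: the sum of a nontrivial character of a finite commutative group. -/
private lemma charSum_ne {H : Type} [CommGroup H] [Fintype H] (χ : H →* Kˣ) (hχ : χ ≠ 1) :
    ∑ h : H, ((χ h : Kˣ) : K) = 0 := by
  classical
  obtain ⟨z, hz⟩ : ∃ z, χ z ≠ 1 := by
    by_contra hc
    push_neg at hc
    exact hχ (MonoidHom.ext fun z => hc z)
  have key : ((χ z : Kˣ) : K) * ∑ h : H, ((χ h : Kˣ) : K) = ∑ h : H, ((χ h : Kˣ) : K) := by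
    rw [Finset.mul_sum]
    refine Fintype.sum_bijective (fun h => z * h) (Group.mulLeft_bijective z) _ _ fun h => ?_
    rw [map_mul, Units.val_mul]
  have hz' : ((χ z : Kˣ) : K) - 1 ≠ 0 := fun h => hz (Units.val_eq_one.mp (sub_eq_zero.mp h))
  have h0 : (((χ z : Kˣ) : K) - 1) * ∑ h : H, ((χ h : Kˣ) : K) = 0 := by
    rw [sub_mul, one_mul, key, sub_self]
  rcases mul_eq_zero.mp h0 with h | h
  · exact absurd h hz'
  · exact h

private lemma sum_indicator {α : Type} [Fintype α] (p : α → Prop) [DecidablePred p] (c : K) :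
    ∑ a : α, (if p a then c else 0) = (Nat.card {x : α // p x} : K) * c := by
  rw [← Finset.sum_filter, Finset.sum_const, nsmul_eq_mul, Nat.card_eq_fintype_card,
    Fintype.card_subtype]

/-- Counting: for a non-degenerate pairing, `|N| * |N^⊥| = |H|`. -/
private lemma perp_count [CharZero K] {H : Type} [CommGroup H] [Finite H]
    (b : H → H → Kˣ)
    (hb1 : ∀ x y z : H, b (x*y) z = b x z * b y z)
    (hb2 : ∀ x y z : H, b x (y*z) = b x y * b x z)
    (hnd : ∀ x : H, (∀ y, b x y = 1) → x = 1)
    (N P : Subgroup H)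
    (hP : ∀ h : H, h ∈ P ↔ ∀ x ∈ N, b x h = 1) :
    Nat.card ↥N * Nat.card ↥P = Nat.card H := by
  classical
  cases nonempty_fintype H
  have h1y : ∀ y : H, b 1 y = 1 := fun y => by
    have h := hb1 1 1 y
    rw [one_mul] at h
    have h2 : b 1 y * 1 = b 1 y * b 1 y := by rw [mul_one]; exact h
    exact (mul_left_cancel h2).symm
  let row : H → (H →* Kˣ) := fun x => MonoidHom.mk' (fun y => b x y) fun u v => hb2 x u v
  let col : H → (↥N →* Kˣ) := fun h => MonoidHom.mk' (fun u => b (↑u) h) fun u v => hb1 ↑u ↑v h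
  have hrow1 : ∀ x : H, row x = 1 ↔ x = 1 := fun x => by
    constructor
    · intro h
      exact hnd x fun y => by have := DFunLike.congr_fun h y; exact this
    · intro h; subst h; exact MonoidHom.ext fun y => h1y y
  have hcol1 : ∀ h : H, col h = 1 ↔ h ∈ P := fun h => by
    rw [hP]
    constructor
    · intro hc x hx
      have := DFunLike.congr_fun hc ⟨x, hx⟩; exact this
    · intro hc; exact MonoidHom.ext fun u => hc ↑u u.2
  have main : ∑ x : ↥N, ∑ h : H, ((b (↑x) h : Kˣ) : K)
      = ∑ h : H, ∑ x : ↥N, ((b (↑x) h : Kˣ) : K) := Finset.sum_comm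
  have lhs : ∑ x : ↥N, ∑ h : H, ((b (↑x) h : Kˣ) : K) = (Fintype.card H : K) := by
    have hterm : ∀ x : ↥N, ∑ h : H, ((b (↑x) h : Kˣ) : K)
        = if x = (1 : ↥N) then (Fintype.card H : K) else 0 := by
      intro x
      by_cases hx : x = (1 : ↥N)
      · rw [if_pos hx]
        have hone : row ((↑x : H)) = 1 := (hrow1 _).mpr (by rw [hx]; rfl)
        calc ∑ h : H, ((b (↑x) h : Kˣ) : K) = ∑ h : H, (((1 : H →* Kˣ) h : Kˣ) : K) := by
              rw [← hone]; rfl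
          _ = (Fintype.card H : K) := charSum_one
      · rw [if_neg hx]
        exact charSum_ne (row (↑x : H)) fun h => hx (OneMemClass.coe_eq_one.mp ((hrow1 _).mp h))
    rw [Finset.sum_congr rfl fun x _ => hterm x, Finset.sum_ite_eq' Finset.univ (1 : ↥N)]
    simp
  have rhs : ∑ h : H, ∑ x : ↥N, ((b (↑x) h : Kˣ) : K)
      = (Nat.card {h : H // h ∈ P} : K) * (Fintype.card ↥N : K) := by
    have hterm : ∀ h : H, ∑ x : ↥N, ((b (↑x) h : Kˣ) : K)
        = if h ∈ P then (Fintype.card ↥N : K) else 0 := by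
      intro h
      by_cases hh : h ∈ P
      · rw [if_pos hh]
        have hone : col h = 1 := (hcol1 h).mpr hh
        calc ∑ x : ↥N, ((b (↑x) h : Kˣ) : K) = ∑ x : ↥N, (((1 : ↥N →* Kˣ) x : Kˣ) : K) := by
              rw [← hone]; rfl
          _ = (Fintype.card ↥N : K) := charSum_one
      · rw [if_neg hh]
        exact charSum_ne (col h) fun hc => hh ((hcol1 h).mp hc)
    rw [Finset.sum_congr rfl fun h _ => hterm h, sum_indicator]
  have hK : (Fintype.card ↥N : K) * (Nat.card ↥P : K) = (Fintype.card H : K) := by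
    rw [← lhs, main, rhs]; ring
  rw [show Nat.card ↥N = Fintype.card ↥N from Nat.card_eq_fintype_card,
    show Nat.card H = Fintype.card H from Nat.card_eq_fintype_card]
  exact_mod_cast hK

/-- Key lemma: for an alternating bimultiplicative pairing `b` on a finite commutative
group `H`, the product `|H| * |Rad(b)|` is a perfect square. -/
private lemma square_lemma [IsAlgClosed K] [CharZero K] :
    ∀ (Nb : ℕ) (H : Type) [CommGroup H] [Finite H], Nat.card H ≤ Nb →
    ∀ (b : H → H → Kˣ),
    (∀ x y z : H, b (x*y) z = b x z * b y z) →
    (∀ x y z : H, b x (y*z) = b x y * b x z) →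
    (∀ x : H, b x x = 1) →
    ∃ t : ℕ, Nat.card H * Nat.card {x : H | ∀ y, b x y = 1} = t ^ 2 := by
  intro Nb
  induction Nb with
  | zero =>
    intro H _ _ hcard b _ _ _
    exact absurd (Nat.card_pos.trans_le hcard) (lt_irrefl 0)
  | succ Nb ih =>
    intro H _ _ hcard b hb1 hb2 halt
    let Φ : H →* (H →* Kˣ) :=
      MonoidHom.mk' (fun x => MonoidHom.mk' (fun y => b x y) fun u v => hb2 x u v)
        fun u v => MonoidHom.ext fun z => hb1 u v z
    have hΦ : ∀ x y : H, Φ x y = b x y := fun _ _ => rfl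
    have hskew : ∀ x y : H, b x y * b y x = 1 := by
      intro x y
      have h := halt (x * y)
      rw [hb1, hb2, hb2, halt, halt, one_mul, mul_one] at h
      exact h
    by_cases hall : ∀ x y : H, b x y = 1
    · refine ⟨Nat.card H, ?_⟩
      have hu : {x : H | ∀ y, b x y = 1} = Set.univ := Set.eq_univ_of_forall fun x y => hall x y
      rw [hu, Nat.card_congr (Equiv.Set.univ H), sq]
    · push_neg at hall
      obtain ⟨x₀, y₀, hx₀⟩ := hall
      haveI : Finite Φ.range := Finite.of_surjective _ Φ.rangeRestrict_surjective
      set n := Monoid.exponent Φ.range with hn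
      have hn0 : n ≠ 0 := Monoid.exponent_ne_zero_of_finite
      obtain ⟨d, hdord⟩ := Monoid.exists_orderOf_eq_exponent (Monoid.exponent_ne_zero.mp hn0)
      obtain ⟨χ, hχmem⟩ := d
      obtain ⟨x, rfl⟩ := MonoidHom.mem_range.mp hχmem
      rw [Subgroup.orderOf_mk] at hdord
      have hordx : orderOf (Φ x) = n := hdord
      have hpow_n : ∀ h : H, (Φ h) ^ n = 1 := fun h => by
        have hmem : Φ h ∈ Φ.range := ⟨h, rfl⟩
        have hdvd : orderOf (⟨Φ h, hmem⟩ : Φ.range) ∣ n := Monoid.order_dvd_exponent _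
        rw [Subgroup.orderOf_mk] at hdvd
        exact orderOf_dvd_iff_pow_eq_one.mp hdvd
      have hbn : ∀ u v : H, (b u v) ^ n = 1 := fun u v => by
        have h := DFunLike.congr_fun (hpow_n u) v
        rw [MonoidHom.pow_apply, MonoidHom.one_apply] at h
        exact h
      have hn1 : 1 < n := by
        rcases Nat.lt_or_ge 1 n with h | h
        · exact h
        · exfalso
          have hne : n = 1 := le_antisymm h (Nat.one_le_iff_ne_zero.mpr hn0)
          have hp := hpow_n x₀
          rw [hne] at hp; replace hp : Φ x₀ = 1 := (pow_one (Φ x₀)).symm.trans hp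
          exact hx₀ (by have := DFunLike.congr_fun hp y₀; exact this)
      haveI : NeZero n := ⟨hn0⟩
      haveI : NeZero ((n : K)) := ⟨Nat.cast_ne_zero.mpr hn0⟩
      set T := (Φ x).range with hT
      haveI : Finite T := Finite.of_surjective _ (Φ x).rangeRestrict_surjective
      obtain ⟨g', hg'⟩ := IsCyclic.exists_generator (α := T)
      set g : Kˣ := (g' : Kˣ) with hgdef
      have hgn : g ^ n = 1 := by
        obtain ⟨yg, hyg⟩ := g'.2
        rw [hgdef, ← hyg]
        exact hbn x yg
      have hordg : orderOf g = n := by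
        refine Nat.dvd_antisymm (orderOf_dvd_iff_pow_eq_one.mpr hgn) ?_
        have hpow : (Φ x) ^ (orderOf g) = 1 := by
          ext h
          rw [MonoidHom.pow_apply, MonoidHom.one_apply]
          have hmem : Φ x h ∈ T := ⟨h, rfl⟩
          obtain ⟨k, hk⟩ := Subgroup.mem_zpowers_iff.mp (hg' ⟨Φ x h, hmem⟩)
          have hk' : g ^ k = Φ x h := by
            rw [hgdef, ← SubgroupClass.coe_zpow]
            exact congrArg Subtype.val hk
          rw [← hk', ← zpow_natCast, ← zpow_mul, mul_comm, zpow_mul, zpow_natCast,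
            pow_orderOf_eq_one, one_zpow]
        rw [← hordx]
        exact orderOf_dvd_iff_pow_eq_one.mpr hpow
      obtain ⟨y, hy⟩ := g'.2
      have hxy : b x y = g := by rw [hgdef]; exact hy
      have hroots : ∀ u : Kˣ, u ^ n = 1 → ∃ k : ℤ, g ^ k = u := by
        intro u hu
        have hle : Subgroup.zpowers g ≤ rootsOfUnity n K :=
          Subgroup.zpowers_le.mpr ((mem_rootsOfUnity n g).mpr hgn)
        haveI : Finite (rootsOfUnity n K) := Nat.finite_of_card_ne_zero
          (by rw [HasEnoughRootsOfUnity.natCard_rootsOfUnity K n]; exact hn0)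
        have heq : Subgroup.zpowers g = rootsOfUnity n K :=
          Subgroup.eq_of_le_of_card_ge hle
            (by rw [HasEnoughRootsOfUnity.natCard_rootsOfUnity K n, Nat.card_zpowers, hordg])
        exact Subgroup.mem_zpowers_iff.mp (heq ▸ (mem_rootsOfUnity n u).mpr hu)
      have hbyx : b y x = g⁻¹ := (inv_eq_of_mul_eq_one_right (hxy ▸ hskew x y)).symm
      let Ψ : H →* Kˣ × Kˣ :=
        MonoidHom.mk' (fun h => (b h x, b h y)) fun u v => Prod.ext (hb1 u v x) (hb1 u v y)
      have hΨ : ∀ h : H, Ψ h = (b h x, b h y) := fun _ => rfl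
      have hrange : Ψ.range = (Subgroup.zpowers g).prod (Subgroup.zpowers g) := by
        apply le_antisymm
        · rintro _ ⟨h, rfl⟩
          rw [Subgroup.mem_prod]
          exact ⟨Subgroup.mem_zpowers_iff.mpr (hroots (b h x) (hbn h x)),
            Subgroup.mem_zpowers_iff.mpr (hroots (b h y) (hbn h y))⟩
        · rintro ⟨u, v⟩ huv
          rw [Subgroup.mem_prod] at huv
          obtain ⟨i, hi⟩ := Subgroup.mem_zpowers_iff.mp huv.1
          obtain ⟨j, hj⟩ := Subgroup.mem_zpowers_iff.mp huv.2
          refine ⟨y ^ (-i) * x ^ j, ?_⟩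
          have hmap : Ψ (y ^ (-i) * x ^ j) = (Ψ y) ^ (-i) * (Ψ x) ^ j := by
            rw [map_mul, map_zpow, map_zpow]
          rw [hmap]
          have h1 : Ψ y = (g⁻¹, (1 : Kˣ)) := by rw [hΨ, hbyx, halt]
          have h2 : Ψ x = ((1 : Kˣ), g) := by rw [hΨ, halt, hxy]
          rw [h1, h2]
          refine Prod.ext ?_ ?_
          · simpa using hi
          · simpa using hj
      set W := Ψ.ker with hWdef
      have hcardH : Nat.card H = n * n * Nat.card ↥W := by
        rw [Subgroup.card_eq_card_quotient_mul_card_subgroup W]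
        congr 1
        rw [Nat.card_congr (QuotientGroup.quotientKerEquivRange Ψ).toEquiv, hrange,
          Nat.card_congr (Subgroup.prodEquiv _ _).toEquiv, Nat.card_prod, Nat.card_zpowers, hordg]
      have hmemW : ∀ h : H, h ∈ W ↔ (b h x = 1 ∧ b h y = 1) := fun h => by
        rw [hWdef, MonoidHom.mem_ker, hΨ, Prod.mk_eq_one]
      have hdecomp : ∀ h : H, ∃ (i j : ℤ) (w : H), w ∈ W ∧ h = x ^ i * y ^ j * w := by
        intro h
        obtain ⟨k1, hk1⟩ := hroots (b h x) (hbn h x)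
        obtain ⟨k2, hk2⟩ := hroots (b h y) (hbn h y)
        refine ⟨k2, -k1, (x ^ k2 * y ^ (-k1))⁻¹ * h, ?_, by group⟩
        rw [hmemW]
        constructor
        · have e1 : b ((x ^ k2 * y ^ (-k1))⁻¹ * h) x
              = (b (x ^ k2 * y ^ (-k1)) x)⁻¹ * b h x := by
            have hmm := map_mul (MonoidHom.mk' (fun u => b u x) fun u v => hb1 u v x)
              ((x ^ k2 * y ^ (-k1))⁻¹) h
            have hmi := map_inv (MonoidHom.mk' (fun u => b u x) fun u v => hb1 u v x)
              (x ^ k2 * y ^ (-k1))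
            simp only [MonoidHom.mk'_apply] at hmm hmi
            rw [hmm, hmi]
          have e2 : b (x ^ k2 * y ^ (-k1)) x = b h x := by
            have hmm := map_mul (MonoidHom.mk' (fun u => b u x) fun u v => hb1 u v x)
              (x ^ k2) (y ^ (-k1))
            have hz1 := map_zpow (MonoidHom.mk' (fun u => b u x) fun u v => hb1 u v x) x k2
            have hz2 := map_zpow (MonoidHom.mk' (fun u => b u x) fun u v => hb1 u v x) y (-k1)
            simp only [MonoidHom.mk'_apply] at hmm hz1 hz2
            rw [hmm, hz1, hz2, halt, hbyx, ← hk1]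
            group
          rw [e1, e2, inv_mul_cancel]
        · have e1 : b ((x ^ k2 * y ^ (-k1))⁻¹ * h) y
              = (b (x ^ k2 * y ^ (-k1)) y)⁻¹ * b h y := by
            have hmm := map_mul (MonoidHom.mk' (fun u => b u y) fun u v => hb1 u v y)
              ((x ^ k2 * y ^ (-k1))⁻¹) h
            have hmi := map_inv (MonoidHom.mk' (fun u => b u y) fun u v => hb1 u v y)
              (x ^ k2 * y ^ (-k1))
            simp only [MonoidHom.mk'_apply] at hmm hmi
            rw [hmm, hmi]
          have e2 : b (x ^ k2 * y ^ (-k1)) y = b h y := by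
            have hmm := map_mul (MonoidHom.mk' (fun u => b u y) fun u v => hb1 u v y)
              (x ^ k2) (y ^ (-k1))
            have hz1 := map_zpow (MonoidHom.mk' (fun u => b u y) fun u v => hb1 u v y) x k2
            have hz2 := map_zpow (MonoidHom.mk' (fun u => b u y) fun u v => hb1 u v y) y (-k1)
            simp only [MonoidHom.mk'_apply] at hmm hz1 hz2
            rw [hmm, hz1, hz2, halt, hxy, ← hk2]
            group
          rw [e1, e2, inv_mul_cancel]
      have hradW : ∀ r : H, (∀ u : H, b r u = 1) → r ∈ W := fun r hr =>
        (hmemW r).mpr ⟨hr x, hr y⟩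
      have hforward : ∀ u : ↥W, (∀ v : ↥W, b ↑u ↑v = 1) → ∀ h : H, b (↑u : H) h = 1 := by
        intro u hu h
        obtain ⟨i, j, w, hw, rfl⟩ := hdecomp h
        have hux : b ↑u x = 1 := ((hmemW ↑u).mp u.2).1
        have huy : b ↑u y = 1 := ((hmemW ↑u).mp u.2).2
        have hmm : Φ (↑u : H) (x ^ i * y ^ j * w)
            = (Φ ↑u x) ^ i * (Φ ↑u y) ^ j * Φ ↑u w := by
          rw [map_mul, map_mul, map_zpow, map_zpow]
        rw [hΦ, hΦ, hΦ, hΦ] at hmm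
        rw [hmm, hux, huy, hu ⟨w, hw⟩, one_zpow, one_zpow, one_mul, one_mul]
      let eRad : {u : ↥W // ∀ v : ↥W, b ↑u ↑v = 1} ≃ ↥{x : H | ∀ y, b x y = 1} :=
        { toFun := fun u => ⟨↑↑u, fun h => hforward ↑u u.2 h⟩
          invFun := fun r => ⟨⟨↑r, hradW ↑r r.2⟩, fun v => r.2 ↑v⟩
          left_inv := fun u => Subtype.ext (Subtype.ext rfl)
          right_inv := fun r => Subtype.ext rfl }
      have hWpos : 0 < Nat.card ↥W := Nat.card_pos
      have hWlt : Nat.card ↥W < Nat.card H := by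
        rw [hcardH]
        have h4 : 1 < n * n := by nlinarith
        calc Nat.card ↥W = 1 * Nat.card ↥W := (one_mul _).symm
          _ < n * n * Nat.card ↥W := mul_lt_mul_of_pos_right h4 hWpos
      have hWle : Nat.card ↥W ≤ Nb := by omega
      obtain ⟨t, ht⟩ := ih ↥W hWle (fun u v => b ↑u ↑v)
        (fun u v z => hb1 ↑u ↑v ↑z) (fun u v z => hb2 ↑u ↑v ↑z) (fun u => halt ↑u)
      refine ⟨n * t, ?_⟩
      have hcards : Nat.card ↥{x : H | ∀ y, b x y = 1}
          = Nat.card {u : ↥W // ∀ v : ↥W, b ↑u ↑v = 1} := Nat.card_congr eRad.symm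
      have ht' : Nat.card ↥W * Nat.card {u : ↥W // ∀ v : ↥W, b ↑u ↑v = 1} = t ^ 2 := ht
      rw [hcardH, hcards]
      calc n * n * Nat.card ↥W * Nat.card {u : ↥W // ∀ v : ↥W, b ↑u ↑v = 1}
          = n * n * (Nat.card ↥W * Nat.card {u : ↥W // ∀ v : ↥W, b ↑u ↑v = 1}) := by ring
        _ = n * n * t ^ 2 := by rw [ht']
        _ = (n * t) ^ 2 := by ring

end Auxiliary

set_option maxHeartbeats 1600000 in
set_option synthInstance.maxHeartbeats 400000 in
/-- Let `K` be an algebraically closed field of characteristic zero, `G` a finite group,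
`M ≤ G` an abelian subgroup, `ω : M̂ × M̂ → Kˣ` a normalized non-degenerate `2`-cocycle, and
`τ ∈ G`.  Then `|N_τ|·|Rad_τ|` is a perfect square whose positive integer square root
divides `|M|`. -/
theorem stmt8 [IsAlgClosed K] [CharZero K] [Finite G] (M : Subgroup G)
    (habelian : ∀ x ∈ M, ∀ y ∈ M, x * y = y * x)
    (ω : (↥M →* Kˣ) → (↥M →* Kˣ) → Kˣ)
    (hcocycle : ∀ φ ψ χ : ↥M →* Kˣ, ω φ ψ * ω (φ * ψ) χ = ω ψ χ * ω φ (ψ * χ))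
    (hnormal : ∀ φ : ↥M →* Kˣ, ω φ 1 = 1 ∧ ω 1 φ = 1)
    (hnondeg : ∀ φ : ↥M →* Kˣ, (∀ ψ : ↥M →* Kˣ, ω φ ψ = ω ψ φ) → φ = 1)
    (τ : G) :
    ∃ s : ℕ, Nat.card (Ntau K M τ) * Nat.card (Radtau K M ω τ) = s ^ 2 ∧
      s ∣ Nat.card M := by
  classical
  letI cM : CommGroup ↥M :=
    { (inferInstance : Group ↥M) with
      mul_comm := fun a b => Subtype.ext (habelian ↑a a.2 ↑b b.2) }
  haveI : NeZero ((Monoid.exponent ↥M : K)) :=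
    ⟨Nat.cast_ne_zero.mpr Monoid.exponent_ne_zero_of_finite⟩
  obtain ⟨e⟩ := CommGroup.monoidHom_mulEquiv_of_hasEnoughRootsOfUnity (↥M) K
  haveI : Finite (↥M →* Kˣ) := Finite.of_equiv _ e.symm.toEquiv
  have hcardM : Nat.card (↥M →* Kˣ) = Nat.card ↥M := Nat.card_congr e.toEquiv
  -- the commutator pairing of ω on characters
  set c : (↥M →* Kˣ) → (↥M →* Kˣ) → Kˣ := fun φ ψ => ω φ ψ * (ω ψ φ)⁻¹ with hcdef
  have hc2 : ∀ a b' c' : ↥M →* Kˣ, c a (b' * c') = c a b' * c a c' := by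
    intro a b' c'
    have e1 := hcocycle a b' c'
    have e2 := hcocycle b' c' a
    have e3 := hcocycle b' a c'
    rw [mul_comm b' a, mul_comm a c'] at e3
    have h1 : ω a (b' * c') = (ω b' c')⁻¹ * (ω a b' * ω (a * b') c') := by
      rw [e1, inv_mul_cancel_left]
    have h2 : ω (b' * c') a = (ω b' c')⁻¹ * (ω c' a * ω b' (c' * a)) := by
      rw [← e2, inv_mul_cancel_left]
    have h3 : ω (a * b') c' = (ω b' a)⁻¹ * (ω a c' * ω b' (c' * a)) := by
      rw [← e3, inv_mul_cancel_left]
    show ω a (b' * c') * (ω (b' * c') a)⁻¹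
      = (ω a b' * (ω b' a)⁻¹) * (ω a c' * (ω c' a)⁻¹)
    rw [h1, h2, h3, Units.ext_iff]
    push_cast
    field_simp
  have hcskew : ∀ a b' : ↥M →* Kˣ, c a b' * c b' a = 1 := by
    intro a b'
    show (ω a b' * (ω b' a)⁻¹) * (ω b' a * (ω a b')⁻¹) = 1
    rw [Units.ext_iff]; push_cast; field_simp
  have hcalt : ∀ a : ↥M →* Kˣ, c a a = 1 := fun a => mul_inv_cancel _
  have hcone : ∀ a : ↥M →* Kˣ, c a 1 = 1 ∧ c 1 a = 1 := fun a => by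
    constructor
    · show ω a 1 * (ω 1 a)⁻¹ = 1
      rw [(hnormal a).1, (hnormal a).2]; simp
    · show ω 1 a * (ω a 1)⁻¹ = 1
      rw [(hnormal a).1, (hnormal a).2]; simp
  have hcnd : ∀ a : ↥M →* Kˣ, (∀ b', c a b' = 1) → a = 1 := fun a ha =>
    hnondeg a fun ψ => mul_inv_eq_one.mp (ha ψ)
  -- the pairing on the product
  set b₀ : ((↥M →* Kˣ) × (↥M →* Kˣ)) → ((↥M →* Kˣ) × (↥M →* Kˣ)) → Kˣ :=
    fun x y => c x.1 y.1 * (c x.2 y.2)⁻¹ with hb₀def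
  have hb₀pc : ∀ x y, b₀ x y = pairCocycle K M ω x y * (pairCocycle K M ω y x)⁻¹ := by
    intro x y
    show (ω x.1 y.1 * (ω y.1 x.1)⁻¹) * (ω x.2 y.2 * (ω y.2 x.2)⁻¹)⁻¹
      = (ω x.1 y.1 * (ω x.2 y.2)⁻¹) * (ω y.1 x.1 * (ω y.2 x.2)⁻¹)⁻¹
    rw [Units.ext_iff]; push_cast; field_simp; all_goals ring
  have hb₀iff : ∀ x y, (pairCocycle K M ω x y = pairCocycle K M ω y x) ↔ b₀ x y = 1 := by
    intro x y
    rw [hb₀pc, mul_inv_eq_one]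
  have hb₀2 : ∀ x y z, b₀ x (y * z) = b₀ x y * b₀ x z := by
    intro x y z
    show c x.1 (y.1 * z.1) * (c x.2 (y.2 * z.2))⁻¹
      = (c x.1 y.1 * (c x.2 y.2)⁻¹) * (c x.1 z.1 * (c x.2 z.2)⁻¹)
    rw [hc2, hc2, Units.ext_iff]; push_cast; field_simp; all_goals ring
  have hcinv : ∀ a b' : ↥M →* Kˣ, c b' a = (c a b')⁻¹ := fun a b' =>
    (inv_eq_of_mul_eq_one_right (hcskew a b')).symm
  have hb₀skew : ∀ x y, b₀ x y * b₀ y x = 1 := by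
    intro x y
    show (c x.1 y.1 * (c x.2 y.2)⁻¹) * (c y.1 x.1 * (c y.2 x.2)⁻¹) = 1
    rw [hcinv x.1 y.1, hcinv x.2 y.2, Units.ext_iff]; push_cast; field_simp
  have hb₀inv : ∀ x y, b₀ y x = (b₀ x y)⁻¹ := fun x y =>
    (inv_eq_of_mul_eq_one_right (hb₀skew x y)).symm
  have hb₀1 : ∀ x y z, b₀ (x * y) z = b₀ x z * b₀ y z := by
    intro x y z
    rw [show b₀ (x * y) z = (b₀ z (x * y))⁻¹ from hb₀inv z (x * y), hb₀2 z x y, mul_inv,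
      show b₀ z x = (b₀ x z)⁻¹ from hb₀inv x z, show b₀ z y = (b₀ y z)⁻¹ from hb₀inv y z,
      inv_inv, inv_inv]
  have hb₀alt : ∀ x, b₀ x x = 1 := by
    intro x
    show c x.1 x.1 * (c x.2 x.2)⁻¹ = 1
    rw [hcalt, hcalt]; simp
  have hb₀onel : ∀ y, b₀ 1 y = 1 := by
    intro y
    show c 1 y.1 * (c 1 y.2)⁻¹ = 1
    rw [(hcone y.1).2, (hcone y.2).2]; simp
  have hb₀oner : ∀ x, b₀ x 1 = 1 := by
    intro x
    show c x.1 1 * (c x.2 1)⁻¹ = 1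
    rw [(hcone x.1).1, (hcone x.2).1]; simp
  have hnd₀ : ∀ x, (∀ y, b₀ x y = 1) → x = 1 := by
    intro x hx
    have h1 : x.1 = 1 := by
      refine hcnd x.1 fun b' => ?_
      have h' : c x.1 b' * (c x.2 (1 : ↥M →* Kˣ))⁻¹ = 1 := hx (b', 1)
      rw [(hcone x.2).1] at h'
      simpa using h'
    have h2 : x.2 = 1 := by
      refine hcnd x.2 fun b' => ?_
      have h' : c x.1 (1 : ↥M →* Kˣ) * (c x.2 b')⁻¹ = 1 := hx (1, b')
      rw [(hcone x.1).1, one_mul] at h'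
      exact inv_eq_one.mp h'
    exact Prod.ext h1 h2
  -- subgroup structures
  set Nsub : Subgroup ((↥M →* Kˣ) × (↥M →* Kˣ)) :=
    { carrier := Ntau K M τ
      one_mem' := fun m hm hm' => by simp
      mul_mem' := fun {p q} hp hq m hm hm' => by
        simp only [Prod.snd_mul, Prod.fst_mul, MonoidHom.mul_apply]
        rw [hp m hm hm', hq m hm hm']
      inv_mem' := fun {p} hp m hm hm' => by
        simp only [Prod.fst_inv, Prod.snd_inv, MonoidHom.inv_apply]
        rw [hp m hm hm'] } with hNsubdef
  have hb₀invr : ∀ p h, b₀ p h⁻¹ = (b₀ p h)⁻¹ := fun p h =>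
    map_inv (MonoidHom.mk' (fun u => b₀ p u) fun u v => hb₀2 p u v) h
  have hb₀invl : ∀ p h, b₀ p⁻¹ h = (b₀ p h)⁻¹ := fun p h =>
    map_inv (MonoidHom.mk' (fun u => b₀ u h) fun u v => hb₀1 u v h) p
  set Psub : Subgroup ((↥M →* Kˣ) × (↥M →* Kˣ)) :=
    { carrier := {h | ∀ p ∈ Ntau K M τ, b₀ p h = 1}
      one_mem' := fun p _ => hb₀oner p
      mul_mem' := fun {h h'} hh hh' p hp => by
        rw [hb₀2, hh p hp, hh' p hp, one_mul]
      inv_mem' := fun {h} hh p hp => by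
        rw [hb₀invr, hh p hp, inv_one] } with hPsubdef
  have hRadiff : ∀ x, x ∈ Radtau K M ω τ ↔ x ∈ Ntau K M τ ∧ ∀ y ∈ Ntau K M τ, b₀ x y = 1 := by
    intro x
    constructor
    · rintro ⟨hx1, hx2⟩
      exact ⟨hx1, fun y hy => (hb₀iff x y).mp (hx2 y hy)⟩
    · rintro ⟨hx1, hx2⟩
      exact ⟨hx1, fun y hy => (hb₀iff x y).mpr (hx2 y hy)⟩
  set Rsub : Subgroup ((↥M →* Kˣ) × (↥M →* Kˣ)) :=
    { carrier := Radtau K M ω τ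
      one_mem' := (hRadiff 1).mpr ⟨Nsub.one_mem, fun y _ => hb₀onel y⟩
      mul_mem' := fun {p q} hp hq => by
        obtain ⟨hp1, hp2⟩ := (hRadiff p).mp hp
        obtain ⟨hq1, hq2⟩ := (hRadiff q).mp hq
        refine (hRadiff (p * q)).mpr ⟨Nsub.mul_mem hp1 hq1, fun y hy => ?_⟩
        rw [hb₀1, hp2 y hy, hq2 y hy, one_mul]
      inv_mem' := fun {p} hp => by
        obtain ⟨hp1, hp2⟩ := (hRadiff p).mp hp
        refine (hRadiff p⁻¹).mpr ⟨Nsub.inv_mem hp1, fun y hy => ?_⟩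
        rw [hb₀invl, hp2 y hy, inv_one] } with hRsubdef
  have hRP : Rsub ≤ Psub := by
    intro x hx
    obtain ⟨hxN, hxall⟩ := (hRadiff x).mp hx
    intro p hp
    rw [show b₀ p x = (b₀ x p)⁻¹ from hb₀inv x p, hxall p hp, inv_one]
  have hPiff : ∀ h, h ∈ Psub ↔ ∀ x ∈ Nsub, b₀ x h = 1 := fun h =>
    ⟨fun hh x hx => hh x hx, fun hh x hx => hh x hx⟩
  have hcount := perp_count (K := K) b₀ hb₀1 hb₀2 hnd₀ Nsub Psub hPiff
  letI instN : CommGroup ↥Nsub :=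
    { (inferInstance : Group ↥Nsub) with mul_comm := fun a b => Subtype.ext (Prod.ext (MonoidHom.ext fun m => mul_comm (a.1.1 m) (b.1.1 m))
      (MonoidHom.ext fun m => mul_comm (a.1.2 m) (b.1.2 m))) }
  obtain ⟨t, ht⟩ := square_lemma (K := K) (Nat.card ↥Nsub) ↥Nsub le_rfl
    (fun u v => b₀ ↑u ↑v) (fun u v z => hb₀1 ↑u ↑v ↑z) (fun u v z => hb₀2 ↑u ↑v ↑z)
    (fun u => hb₀alt ↑u)
  have ht' : Nat.card ↥Nsub * Nat.card {u : ↥Nsub // ∀ v : ↥Nsub, b₀ ↑u ↑v = 1} = t ^ 2 := ht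
  let eRad : {u : ↥Nsub // ∀ v : ↥Nsub, b₀ ↑u ↑v = 1} ≃ ↥(Radtau K M ω τ) :=
    { toFun := fun u => ⟨↑↑u, (hRadiff ↑↑u).mpr ⟨u.1.2, fun y hy => u.2 ⟨y, hy⟩⟩⟩
      invFun := fun r => ⟨⟨↑r, ((hRadiff ↑r).mp r.2).1⟩, fun v => ((hRadiff ↑r).mp r.2).2 ↑v v.2⟩
      left_inv := fun u => Subtype.ext (Subtype.ext rfl)
      right_inv := fun r => Subtype.ext rfl }
  have eq1 : Nat.card (Ntau K M τ) = Nat.card ↥Nsub := rfl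
  have eq2 : Nat.card (Radtau K M ω τ)
      = Nat.card {u : ↥Nsub // ∀ v : ↥Nsub, b₀ ↑u ↑v = 1} := Nat.card_congr eRad.symm
  refine ⟨t, ?_, ?_⟩
  · rw [eq1, eq2]; exact ht'
  · have hRcard : Nat.card {u : ↥Nsub // ∀ v : ↥Nsub, b₀ ↑u ↑v = 1} = Nat.card ↥Rsub := by
      rw [← eq2]; rfl
    have hdvd : t ^ 2 ∣ (Nat.card ↥M) ^ 2 := by
      calc t ^ 2 = Nat.card ↥Nsub * Nat.card {u : ↥Nsub // ∀ v : ↥Nsub, b₀ ↑u ↑v = 1} :=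
            ht'.symm
        _ ∣ Nat.card ↥Nsub * Nat.card ↥Psub := by
            rw [hRcard]
            exact mul_dvd_mul_left _ (Subgroup.card_dvd_of_le hRP)
        _ = Nat.card ((↥M →* Kˣ) × (↥M →* Kˣ)) := hcount
        _ = (Nat.card ↥M) ^ 2 := by rw [Nat.card_prod, hcardM, sq]
    exact (Nat.pow_dvd_pow_iff two_ne_zero).mp hdvd

end
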